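/- Let λ_i ∈ ℝ_{≥0}^l be vectors arranged in non-increasing order, for 1 ≤ i ≤ m, and let l < d. Then the following are equivalent: (1) there exists an (m,l,d)-protocol {V_i}_{i=1}^m such that λ(V_i*V_i) = (λ_i, 0_{d−l}) for 1 ≤ i ≤ m; (2) there exists an orthogonal projection P ∈ M_{ml}(𝔽), regarded as an m×m block matrix P = (P_{ij})_{i,j=1}^m with blocks P_{ij} ∈ M_l(𝔽), such that tr(P) = d and λ(P_{ii}) = λ_i for 1 ≤ i ≤ m. -/

import Mathlib

open Matrix BigOperators
open scoped ComplexOrder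

noncomputable section

variable {𝕜 : Type*} [RCLike 𝕜]

/-- Sum of the `k` largest entries of a vector `x : Fin n → ℝ`,
as the supremum of the sums over subsets of cardinality `k`. -/
noncomputable def kMaxSum {n : ℕ} (x : Fin n → ℝ) (k : ℕ) : ℝ :=
  sSup ((fun t : Finset (Fin n) => ∑ i ∈ t, x i) '' {t : Finset (Fin n) | t.card = k})

/-- `x ≺_w y` : submajorization of real vectors. -/
def SubMajVec {n : ℕ} (x y : Fin n → ℝ) : Prop :=
  ∀ k : ℕ, k ≤ n → kMaxSum x k ≤ kMaxSum y k

/-- `A ≺_w B` : submajorization of self-adjoint matrices (via eigenvalues). -/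
def SubMajMat {n : ℕ} (A B : Matrix (Fin n) (Fin n) 𝕜) : Prop :=
  ∃ (hA : A.IsHermitian) (hB : B.IsHermitian), SubMajVec hA.eigenvalues hB.eigenvalues

/-- `A ≺ B` : majorization of self-adjoint matrices. -/
def MajMat {n : ℕ} (A B : Matrix (Fin n) (Fin n) 𝕜) : Prop :=
  SubMajMat A B ∧ A.trace = B.trace

/-- The q-potential `P_q(V) = Σ_{i,j} |V_i V_j*|²` of a reconstruction system. -/
noncomputable def qPotential {m l d : ℕ} (V : Fin m → Matrix (Fin l) (Fin d) 𝕜) :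
    Matrix (Fin l) (Fin l) 𝕜 :=
  ∑ i, ∑ j, (V i * (V j)ᴴ)ᴴ * (V i * (V j)ᴴ)

/-- `tr |A|² = tr(AᴴA)`, as a real number. -/
noncomputable def traceAbsSq {a b : ℕ} (A : Matrix (Fin a) (Fin b) 𝕜) : ℝ :=
  RCLike.re (Aᴴ * A).trace

/-- `tr |A| = tr((AᴴA)^{1/2})`, the sum of the singular values of `A`. -/
noncomputable def traceAbs {a b : ℕ} (A : Matrix (Fin a) (Fin b) 𝕜) : ℝ :=
  ∑ j, Real.sqrt ((Matrix.posSemidef_conjTranspose_mul_self A).1.eigenvalues j)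

/-- A unitarily invariant norm on `M_n(𝕜)`. -/
structure UINorm (n : ℕ) (𝕜 : Type*) [RCLike 𝕜] where
  N : Matrix (Fin n) (Fin n) 𝕜 → ℝ
  nonneg : ∀ A, 0 ≤ N A
  eq_zero : ∀ A, N A = 0 → A = 0
  triangle : ∀ A B, N (A + B) ≤ N A + N B
  smul_eq : ∀ (c : 𝕜) (A), N (c • A) = ‖c‖ * N A
  invariant : ∀ (A : Matrix (Fin n) (Fin n) 𝕜) (U W : Matrix.unitaryGroup (Fin n) 𝕜),
    N ((U : Matrix (Fin n) (Fin n) 𝕜) * A * (W : Matrix (Fin n) (Fin n) 𝕜)) = N A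

/-- `X ⊕ 0_t` : padding a square matrix with `t` zero rows and columns. -/
noncomputable def padMat {r : ℕ} (t : ℕ) (X : Matrix (Fin r) (Fin r) 𝕜) :
    Matrix (Fin (r + t)) (Fin (r + t)) 𝕜 :=
  Matrix.reindex finSumFinEquiv finSumFinEquiv (Matrix.fromBlocks X 0 0 0)

/-- A compatible unitarily invariant norm: a family of unitarily invariant norms,
one in each dimension, unchanged by adjoining zero rows and columns. -/
structure CUIN (𝕜 : Type*) [RCLike 𝕜] where
  N : ∀ n : ℕ, Matrix (Fin n) (Fin n) 𝕜 → ℝ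
  nonneg : ∀ n A, 0 ≤ N n A
  eq_zero : ∀ n A, N n A = 0 → A = 0
  triangle : ∀ n A B, N n (A + B) ≤ N n A + N n B
  smul_eq : ∀ n (c : 𝕜) (A), N n (c • A) = ‖c‖ * N n A
  invariant : ∀ n (A : Matrix (Fin n) (Fin n) 𝕜) (U W : Matrix.unitaryGroup (Fin n) 𝕜),
    N n ((U : Matrix (Fin n) (Fin n) 𝕜) * A * (W : Matrix (Fin n) (Fin n) 𝕜)) = N n A
  compatible : ∀ (r t : ℕ) (X : Matrix (Fin r) (Fin r) 𝕜), N (r + t) (padMat t X) = N r X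

namespace CUIN

/-- The associated symmetric gauge function, evaluated on a real vector:
`ψ(x) = ‖diag(x)‖`. -/
noncomputable def psi (Φ : CUIN 𝕜) {n : ℕ} (x : Fin n → ℝ) : ℝ :=
  Φ.N n (Matrix.diagonal fun i => (x i : 𝕜))

/-- `η_ψ(l) = ψ(e_l)/l = ‖I_l‖/l`. -/
noncomputable def eta (Φ : CUIN 𝕜) (l : ℕ) : ℝ := Φ.N l 1 / l

/-- A compatible u.i.n. is strict if `‖A‖ = tr(A)·η_ψ(l)` for positive semidefinite `A`
forces `A = (tr A / l)·I`. -/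
def Strict (Φ : CUIN 𝕜) : Prop :=
  ∀ (l : ℕ) (A : Matrix (Fin l) (Fin l) 𝕜), A.PosSemidef →
    Φ.N l A = RCLike.re A.trace * Φ.eta l → A = (A.trace / (l : 𝕜)) • 1

/-- A 2-strongly strict compatible u.i.n.: strict, and on `M_2` any two self-adjoint
matrices `A ≺ B` with equal norms are unitarily equivalent. -/
def TwoStronglyStrict (Φ : CUIN 𝕜) : Prop :=
  Φ.Strict ∧ ∀ A B : Matrix (Fin 2) (Fin 2) 𝕜, A.IsHermitian → B.IsHermitian →
    MajMat A B → Φ.N 2 A = Φ.N 2 B →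
    ∃ U ∈ Matrix.unitaryGroup (Fin 2) 𝕜, A = star U * B * U

end CUIN

/-- Worst-case reconstruction error for `p` lost packets:
`e_p^ψ(V) = max_{|K| = p} ‖V*V − V*E_K V‖ = max_{|K| = p} ‖Σ_{i ∈ K} Vᵢ*Vᵢ‖`. -/
noncomputable def errP {m l d : ℕ} (Φ : CUIN 𝕜) (p : ℕ)
    (V : Fin m → Matrix (Fin l) (Fin d) 𝕜) : ℝ :=
  sSup {r : ℝ | ∃ K : Finset (Fin m), K.card = p ∧ r = Φ.N d (∑ i ∈ K, (V i)ᴴ * V i)}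

/-- The constant `c_{m,l,d} = √( (d/((m−1)·m·l))·(1 − d/(ml)) )`. -/
noncomputable def cmld (m l d : ℕ) : ℝ :=
  Real.sqrt ((d : ℝ) / (((m : ℝ) - 1) * m * l) * (1 - (d : ℝ) / ((m : ℝ) * l)))

/-- A uniformly weighted projective rank-`l` `(m,l,d)`-protocol:
`Σᵢ Vᵢ*Vᵢ = I_d` and `VᵢVᵢ* = (d/(ml))·I_l` for every `i`. -/
def IsUWP {m l d : ℕ} (V : Fin m → Matrix (Fin l) (Fin d) 𝕜) : Prop :=
  (∑ i, (V i)ᴴ * V i = 1) ∧ ∀ i, V i * (V i)ᴴ = ((d : 𝕜) / ((m : 𝕜) * (l : 𝕜))) • 1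

/-- A uniformly weighted projective rank-`l` `(m,l,d)`-protocol, stated via projections:
`Σᵢ Vᵢ*Vᵢ = I_d` and `Vᵢ*Vᵢ = (d/(ml))·Pᵢ` with `Pᵢ` rank-`l` orthogonal projections. -/
def IsUWPProj {m l d : ℕ} (V : Fin m → Matrix (Fin l) (Fin d) 𝕜) : Prop :=
  (∑ i, (V i)ᴴ * V i = 1) ∧ ∀ i, ∃ P : Matrix (Fin d) (Fin d) 𝕜,
    Pᴴ = P ∧ P * P = P ∧ P.rank = l ∧ (V i)ᴴ * V i = ((d : 𝕜) / ((m : 𝕜) * (l : 𝕜))) • P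

/-- Padding a vector with zeros to length `d`. -/
def padVec {l : ℕ} (d : ℕ) (x : Fin l → ℝ) : Fin d → ℝ :=
  fun j => if h : (j : ℕ) < l then x ⟨j, h⟩ else 0

end

section Aux

open Matrix Polynomial
open scoped ComplexOrder

variable {𝕜 : Type*} [RCLike 𝕜]

private theorem charpoly_diag_aux {n : Type*} [Fintype n] [DecidableEq n] (g : n → 𝕜) :
    (Matrix.diagonal g).charpoly = ∏ i, (X - C (g i)) := by
  rw [Matrix.charpoly, ← Matrix.det_diagonal]
  congr 1
  ext i j
  by_cases h : i = j
  · subst h; simp [Matrix.charmatrix_apply_eq]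
  · simp [Matrix.charmatrix_apply_ne _ _ _ h, Matrix.diagonal_apply_ne _ h]

private theorem charpoly_conj_aux {n : Type*} [Fintype n] [DecidableEq n]
    (U M W : Matrix n n 𝕜) (hUW : U * W = 1) :
    (U * M * W).charpoly = M.charpoly := by
  have h1 : (U.map C : Matrix n n 𝕜[X]) * W.map C = 1 := by
    rw [← Matrix.map_mul, hUW]; simp
  have hcm : charmatrix (U * M * W) = U.map C * charmatrix M * W.map C := by
    rw [charmatrix, charmatrix]
    simp only [Matrix.mul_sub, Matrix.sub_mul]
    congr 1
    · rw [show (U.map C : Matrix n n 𝕜[X]) * Matrix.scalar n X = Matrix.scalar n X * U.map C from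
        ((Matrix.scalar_commute X (fun r => Commute.all _ _) (U.map C))).symm]
      rw [Matrix.mul_assoc, h1, Matrix.mul_one]
    · simp only [RingHom.mapMatrix_apply, Matrix.map_mul]
  rw [Matrix.charpoly, Matrix.charpoly, hcm, Matrix.det_mul, Matrix.det_mul]
  have h2 : (U.map C : Matrix n n 𝕜[X]).det * (W.map C).det = 1 := by
    rw [← Matrix.det_mul, h1, Matrix.det_one]
  calc (U.map C : Matrix n n 𝕜[X]).det * (charmatrix M).det * (W.map C).det
      = (charmatrix M).det * ((U.map C : Matrix n n 𝕜[X]).det * (W.map C).det) := by ring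
    _ = (charmatrix M).det := by rw [h2, mul_one]

private theorem herm_charpoly_aux {n : Type*} [Fintype n] [DecidableEq n] {A : Matrix n n 𝕜}
    (hA : A.IsHermitian) :
    A.charpoly = ∏ i, (X - C ((hA.eigenvalues i : ℝ) : 𝕜)) := by
  conv_lhs => rw [hA.spectral_theorem]
  rw [Unitary.conjStarAlgAut_apply, charpoly_conj_aux _ _ _ ?h1, charpoly_diag_aux]
  · rfl
  case h1 =>
    simpa [Matrix.star_eq_conjTranspose] using
      (Matrix.mem_unitaryGroup_iff.mp hA.eigenvectorUnitary.2 : _)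

private theorem eval_charpoly_aux {n : Type*} [Fintype n] [DecidableEq n]
    (M : Matrix n n 𝕜) (x : 𝕜) :
    M.charpoly.eval x = (x • (1 : Matrix n n 𝕜) - M).det := by
  rw [Matrix.charpoly, ← Polynomial.coe_evalRingHom, RingHom.map_det]
  congr 1
  ext i j
  by_cases h : i = j
  · subst h
    simp [RingHom.mapMatrix_apply, Matrix.charmatrix_apply_eq, Matrix.one_apply]
  · simp [RingHom.mapMatrix_apply, Matrix.charmatrix_apply_ne _ _ _ h, Matrix.one_apply_ne h]

private theorem charpoly_AB_BA_aux {l d : ℕ} (hld : l < d) (A : Matrix (Fin l) (Fin d) 𝕜) :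
    (Aᴴ * A).charpoly * X ^ l = (A * Aᴴ).charpoly * X ^ d := by
  apply Polynomial.funext
  intro x
  simp only [eval_mul, eval_pow, eval_X, eval_charpoly_aux]
  by_cases hx : x = 0
  · subst hx
    have hd : (0:𝕜) ^ d = 0 := zero_pow (Nat.zero_lt_of_lt hld).ne'
    rw [hd, mul_zero]
    rcases Nat.eq_zero_or_pos l with hl | hl
    · haveI : IsEmpty (Fin l) := by rw [hl]; infer_instance
      haveI : Nonempty (Fin d) := Fin.pos_iff_nonempty.mp (Nat.zero_lt_of_lt hld)
      have hA0 : Aᴴ * A = 0 := by ext i j; simp [Matrix.mul_apply]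
      rw [hA0, hl, pow_zero, mul_one, zero_smul, sub_zero, Matrix.det_zero]
    · rw [zero_pow hl.ne', mul_zero]
  · have e1 : x • (1 : Matrix (Fin d) (Fin d) 𝕜) - Aᴴ * A
        = x • ((1 : Matrix (Fin d) (Fin d) 𝕜) - Aᴴ * (x⁻¹ • A)) := by
      rw [smul_sub]
      congr 1
      rw [Matrix.mul_smul, smul_smul, mul_inv_cancel₀ hx, one_smul]
    have e2 : x • (1 : Matrix (Fin l) (Fin l) 𝕜) - A * Aᴴ
        = x • ((1 : Matrix (Fin l) (Fin l) 𝕜) - (x⁻¹ • A) * Aᴴ) := by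
      rw [smul_sub]
      congr 1
      rw [Matrix.smul_mul, smul_smul, mul_inv_cancel₀ hx, one_smul]
    rw [e1, e2, Matrix.det_smul, Matrix.det_smul, Matrix.det_one_sub_mul_comm]
    simp only [Fintype.card_fin]
    ring

private theorem herm_roots_aux {n : Type*} [Fintype n] [DecidableEq n] {A : Matrix n n 𝕜}
    (hA : A.IsHermitian) :
    A.charpoly.roots
      = Multiset.map (fun i => ((hA.eigenvalues i : ℝ) : 𝕜)) Finset.univ.val := by
  rw [herm_charpoly_aux hA, Finset.prod_eq_multiset_prod,
    show (Multiset.map (fun i => X - C ((hA.eigenvalues i : ℝ) : 𝕜)) Finset.univ.val)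
      = Multiset.map (fun a => X - C a)
          (Multiset.map (fun i => ((hA.eigenvalues i : ℝ) : 𝕜)) Finset.univ.val) from
      (Multiset.map_map (fun a : 𝕜 => X - C a)
        (fun i => ((hA.eigenvalues i : ℝ) : 𝕜)) Finset.univ.val).symm]
  exact roots_multiset_prod_X_sub_C _

private theorem eig_congr_aux {n : Type*} [Fintype n] [DecidableEq n]
    {A B : Matrix n n 𝕜} (hAB : A = B) (hA : A.IsHermitian) (hB : B.IsHermitian) :
    hA.eigenvalues = hB.eigenvalues := by subst hAB; rfl

private theorem eig_multiset_bridge_aux {l d : ℕ} (hld : l < d) (A : Matrix (Fin l) (Fin d) 𝕜) :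
    Multiset.map (Matrix.posSemidef_conjTranspose_mul_self A).1.eigenvalues Finset.univ.val
      = Multiset.map (Matrix.posSemidef_self_mul_conjTranspose A).1.eigenvalues Finset.univ.val
        + Multiset.replicate (d - l) 0 := by
  have h1 := charpoly_AB_BA_aux hld A
  have h2 := congrArg Polynomial.roots h1
  rw [Polynomial.roots_mul (((Aᴴ * A).charpoly_monic.mul (monic_X_pow l)).ne_zero),
      Polynomial.roots_mul (((A * Aᴴ).charpoly_monic.mul (monic_X_pow d)).ne_zero),
      Polynomial.roots_pow, Polynomial.roots_pow, Polynomial.roots_X,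
      herm_roots_aux (Matrix.posSemidef_conjTranspose_mul_self A).1,
      herm_roots_aux (Matrix.posSemidef_self_mul_conjTranspose A).1] at h2
  apply Multiset.map_injective (f := (RCLike.ofReal : ℝ → 𝕜)) RCLike.ofReal_injective
  rw [Multiset.map_add, Multiset.map_map, Multiset.map_map, Multiset.map_replicate]
  rw [Multiset.nsmul_singleton, Multiset.nsmul_singleton] at h2
  have hd : Multiset.replicate d (0:𝕜)
      = Multiset.replicate (d - l) 0 + Multiset.replicate l 0 := by
    rw [← Multiset.replicate_add, Nat.sub_add_cancel hld.le]
  rw [hd, ← add_assoc] at h2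
  simp only [Function.comp_def, RCLike.ofReal_zero]
  exact add_right_cancel h2

private theorem exists_perm_iff_multiset_eq_aux {n : ℕ} {α : Type*} [LinearOrder α]
    (f g : Fin n → α) :
    (∃ σ : Equiv.Perm (Fin n), ∀ j, f (σ j) = g j) ↔
      Multiset.map f Finset.univ.val = Multiset.map g Finset.univ.val := by
  have key : ∀ (h : Fin n → α) (σ : Equiv.Perm (Fin n)),
      Multiset.map (h ∘ σ) Finset.univ.val = Multiset.map h Finset.univ.val := by
    intro h σ
    rw [← Multiset.map_map]
    congr 1
    conv_rhs => rw [show (Finset.univ : Finset (Fin n))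
      = Finset.univ.map σ.toEmbedding from (Finset.map_univ_equiv σ).symm]
    rw [Finset.map_val]
    rfl
  constructor
  · rintro ⟨σ, hσ⟩
    have : f ∘ σ = g := funext hσ
    rw [← this]
    exact (key f σ).symm
  · intro hm
    have hf := key f (Tuple.sort f)
    have hg := key g (Tuple.sort g)
    have hperm : List.Perm (List.ofFn (f ∘ Tuple.sort f)) (List.ofFn (g ∘ Tuple.sort g)) := by
      rw [← Multiset.coe_eq_coe, ← Fin.univ_val_map, ← Fin.univ_val_map, hf, hg, hm]
    have hsorted : List.ofFn (f ∘ Tuple.sort f) = List.ofFn (g ∘ Tuple.sort g) :=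
      List.Perm.eq_of_sortedLE
        ((List.sortedLE_ofFn_iff).mpr (Tuple.monotone_sort f))
        ((List.sortedLE_ofFn_iff).mpr (Tuple.monotone_sort g)) hperm
    have heq : f ∘ Tuple.sort f = g ∘ Tuple.sort g := List.ofFn_injective hsorted
    refine ⟨(Tuple.sort g).symm.trans (Tuple.sort f), fun j => ?_⟩
    have := congrFun heq ((Tuple.sort g).symm j)
    simpa using this

private theorem padVec_multiset_aux {l d : ℕ} (hld : l ≤ d) (x : Fin l → ℝ) :
    Multiset.map (padVec d x) Finset.univ.val
      = Multiset.map x Finset.univ.val + Multiset.replicate (d - l) 0 := by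
  classical
  set S : Finset (Fin d) := Finset.univ.map (Fin.castLEEmb hld) with hS
  have hmem : ∀ j : Fin d, j ∈ S ↔ (j : ℕ) < l := by
    intro j
    simp only [hS, Finset.mem_map, Finset.mem_univ, true_and]
    constructor
    · rintro ⟨a, rfl⟩; exact a.isLt
    · intro h; exact ⟨⟨j, h⟩, rfl⟩
  have hsplit : (Finset.univ : Finset (Fin d)).val = S.val + (Finset.univ \ S).val := by
    rw [Finset.sdiff_val, add_comm]
    exact (tsub_add_cancel_of_le (Finset.val_le_iff.mpr (Finset.subset_univ S))).symm
  rw [hsplit, Multiset.map_add]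
  congr 1
  · rw [hS, Finset.map_val, Multiset.map_map]
    apply Multiset.map_congr rfl
    intro a _
    simp only [Function.comp_apply, padVec, Fin.castLEEmb_apply, Fin.coe_castLE, a.isLt,
      dif_pos]
  · have hall : ∀ j ∈ (Finset.univ \ S).val, padVec d x j = 0 := by
      intro j hj
      have hnot : ¬ (j : ℕ) < l := by
        have := Finset.mem_sdiff.mp (by exact hj : j ∈ Finset.univ \ S)
        exact fun hc => this.2 ((hmem j).mpr hc)
      simp [padVec, hnot]
    calc Multiset.map (padVec d x) (Finset.univ \ S).val
        = Multiset.map (fun _ => (0:ℝ)) (Finset.univ \ S).val :=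
          Multiset.map_congr rfl hall
      _ = Multiset.replicate (d - l) 0 := by
          rw [Multiset.map_const']
          congr 1
          show (Finset.univ \ S).card = d - l
          rw [Finset.card_sdiff_of_subset (Finset.subset_univ S)]
          simp [hS]

private theorem blockA_aux {m l d : ℕ} (W : Matrix (Fin m × Fin l) (Fin d) 𝕜) :
    Wᴴ * W = ∑ i, (Matrix.of fun a b => W (i,a) b)ᴴ * (Matrix.of fun a b => W (i,a) b) := by
  ext b b'
  simp [Matrix.mul_apply, Matrix.sum_apply, Matrix.conjTranspose_apply,
    Fintype.sum_prod_type]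

private theorem blockB_aux {m l d : ℕ} (W : Matrix (Fin m × Fin l) (Fin d) 𝕜) (i : Fin m) :
    (Matrix.of fun a b => (W * Wᴴ) (i,a) (i,b))
      = (Matrix.of fun a b => W (i,a) b) * (Matrix.of fun a b => W (i,a) b)ᴴ := by
  ext a b
  simp [Matrix.mul_apply, Matrix.conjTranspose_apply]

end Aux

theorem stmt18 {𝕜 : Type*} [RCLike 𝕜] (m l d : ℕ) (hld : l < d)
    (lam : Fin m → Fin l → ℝ) (hnn : ∀ i j, 0 ≤ lam i j) (hdec : ∀ i, Antitone (lam i)) :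
    (∃ V : Fin m → Matrix (Fin l) (Fin d) 𝕜,
        (∑ i, (V i)ᴴ * V i = 1) ∧
        ∀ i, ∃ σ : Equiv.Perm (Fin d), ∀ j,
          (Matrix.posSemidef_conjTranspose_mul_self (V i)).1.eigenvalues (σ j) =
            padVec d (lam i) j) ↔
    (∃ P : Matrix (Fin m × Fin l) (Fin m × Fin l) 𝕜,
        Pᴴ = P ∧ P * P = P ∧ P.trace = (d : 𝕜) ∧
        ∀ i, ∃ (h : (Matrix.of fun a b => P (i, a) (i, b) :
              Matrix (Fin l) (Fin l) 𝕜).IsHermitian)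
            (σ : Equiv.Perm (Fin l)), ∀ j, h.eigenvalues (σ j) = lam i j) := by
  classical
  constructor
  · rintro ⟨V, hV1, hV2⟩
    set W : Matrix (Fin m × Fin l) (Fin d) 𝕜 := Matrix.of fun x b => V x.1 x.2 b with hW
    have hVW : ∀ i, (Matrix.of fun a b => W (i,a) b) = V i := fun i => rfl
    have hWW : Wᴴ * W = 1 := by
      rw [blockA_aux]
      simpa only [hVW] using hV1
    refine ⟨W * Wᴴ, ?_, ?_, ?_, ?_⟩
    · rw [Matrix.conjTranspose_mul, Matrix.conjTranspose_conjTranspose]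
    · rw [Matrix.mul_assoc W Wᴴ (W * Wᴴ), ← Matrix.mul_assoc Wᴴ W Wᴴ, hWW,
        Matrix.one_mul]
    · rw [Matrix.trace_mul_comm, hWW, Matrix.trace_one]
      simp
    · intro i
      have hbm : (Matrix.of fun a b => (W * Wᴴ) (i,a) (i,b))
          = (V i) * (V i)ᴴ := by
        rw [blockB_aux, hVW]
      have hherm : (Matrix.of fun a b => (W * Wᴴ) (i,a) (i,b)).IsHermitian := by
        rw [hbm]; exact (Matrix.posSemidef_self_mul_conjTranspose (V i)).1
      refine ⟨hherm, ?_⟩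
      apply (exists_perm_iff_multiset_eq_aux _ _).mpr
      rw [eig_congr_aux hbm hherm (Matrix.posSemidef_self_mul_conjTranspose (V i)).1]
      have hhyp : Multiset.map (Matrix.posSemidef_conjTranspose_mul_self (V i)).1.eigenvalues
          Finset.univ.val = Multiset.map (padVec d (lam i)) Finset.univ.val :=
        (exists_perm_iff_multiset_eq_aux _ _).mp (hV2 i)
      have hb := eig_multiset_bridge_aux hld (V i)
      rw [hhyp, padVec_multiset_aux hld.le (lam i)] at hb
      exact (add_right_cancel hb).symm
  · rintro ⟨P, hPh, hPP, htr, hbl⟩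
    have hP : P.IsHermitian := hPh
    set U : Matrix (Fin m × Fin l) (Fin m × Fin l) 𝕜
      := (hP.eigenvectorUnitary : Matrix (Fin m × Fin l) (Fin m × Fin l) 𝕜) with hUdef
    have hU1 : star U * U = 1 := Matrix.mem_unitaryGroup_iff'.mp hP.eigenvectorUnitary.2
    have hU2 : U * star U = 1 := Matrix.mem_unitaryGroup_iff.mp hP.eigenvectorUnitary.2
    set f : Fin m × Fin l → 𝕜 := fun x => ((hP.eigenvalues x : ℝ) : 𝕜) with hfdef
    have hspec : P = U * Matrix.diagonal f * star U := hP.spectral_theorem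
    have cancel : ∀ X : Matrix (Fin m × Fin l) (Fin m × Fin l) 𝕜,
        star U * (U * X * star U) * U = X := by
      intro X
      simp only [← Matrix.mul_assoc]
      rw [hU1, Matrix.one_mul, Matrix.mul_assoc, hU1, Matrix.mul_one]
    have h2 : U * (Matrix.diagonal f * Matrix.diagonal f) * star U
        = U * Matrix.diagonal f * star U := by
      have e : U * (Matrix.diagonal f * Matrix.diagonal f) * star U
          = (U * Matrix.diagonal f * star U) * (U * Matrix.diagonal f * star U) := by
        rw [show (U * Matrix.diagonal f * star U) * (U * Matrix.diagonal f * star U)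
            = U * Matrix.diagonal f * ((star U * U) * (Matrix.diagonal f * star U)) by
          simp only [Matrix.mul_assoc], hU1, Matrix.one_mul]
        simp only [Matrix.mul_assoc]
      rw [e, ← hspec, hPP, hspec]
    have hDD : Matrix.diagonal f * Matrix.diagonal f = Matrix.diagonal f := by
      have h3 := congrArg (fun M => star U * M * U) h2
      rwa [cancel, cancel] at h3
    have hf2 : ∀ x, hP.eigenvalues x * hP.eigenvalues x = hP.eigenvalues x := by
      intro x
      have h4 := congrArg (fun M : Matrix (Fin m × Fin l) (Fin m × Fin l) 𝕜 => M x x) hDD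
      simp only [Matrix.diagonal_mul_diagonal, Matrix.diagonal_apply_eq, Pi.mul_apply,
        hfdef] at h4
      exact_mod_cast h4
    have eig01 : ∀ x, hP.eigenvalues x = 0 ∨ hP.eigenvalues x = 1 := by
      intro x
      have h0 : hP.eigenvalues x * (hP.eigenvalues x - 1) = 0 := by
        linear_combination hf2 x
      rcases mul_eq_zero.mp h0 with h | h
      · exact Or.inl h
      · exact Or.inr (by linarith [sub_eq_zero.mp h])
    have htrace : ∑ x, hP.eigenvalues x = (d : ℝ) := by
      have h1 : P.trace = ∑ x, f x := by
        rw [hspec, Matrix.trace_mul_comm, ← Matrix.mul_assoc, hU1, Matrix.one_mul,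
          Matrix.trace_diagonal]
      have h5 : ((∑ x, hP.eigenvalues x : ℝ) : 𝕜) = ((d : ℝ) : 𝕜) := by
        push_cast
        rw [← h1, htr]
      exact_mod_cast h5
    set S : Finset (Fin m × Fin l) := Finset.univ.filter (fun x => hP.eigenvalues x = 1)
      with hSdef
    have hcard : S.card = d := by
      have h6 : ((S.card : ℝ)) = (d : ℝ) := by
        rw [← htrace,
          ← Finset.sum_filter_add_sum_filter_not Finset.univ
            (fun x => hP.eigenvalues x = 1) hP.eigenvalues]
        have hA : ∑ x ∈ Finset.univ.filter (fun x => hP.eigenvalues x = 1),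
            hP.eigenvalues x = (S.card : ℝ) := by
          rw [Finset.sum_congr rfl (fun x hx => (Finset.mem_filter.mp hx).2), hSdef]
          simp
        have hB : ∑ x ∈ Finset.univ.filter (fun x => ¬ hP.eigenvalues x = 1),
            hP.eigenvalues x = 0 := by
          apply Finset.sum_eq_zero
          intro x hx
          rcases eig01 x with h | h
          · exact h
          · exact absurd h (Finset.mem_filter.mp hx).2
        rw [hA, hB, add_zero]
      exact_mod_cast h6
    let e : Fin d ≃ {x // x ∈ S} := (S.equivFinOfCardEq hcard).symm
    set W : Matrix (Fin m × Fin l) (Fin d) 𝕜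
      := Matrix.of fun x b => U x ((e b : {x // x ∈ S}) : Fin m × Fin l) with hWdef
    have hWW : Wᴴ * W = 1 := by
      ext b b'
      have h7 : (Wᴴ * W) b b'
          = (star U * U) ((e b : {x // x ∈ S}) : Fin m × Fin l)
              ((e b' : {x // x ∈ S}) : Fin m × Fin l) := by
        simp [Matrix.mul_apply, Matrix.conjTranspose_apply, hWdef,
          Matrix.star_eq_conjTranspose, Matrix.star_apply]
      rw [h7, hU1]
      by_cases hbb : b = b'
      · subst hbb; simp [Matrix.one_apply]
      · rw [Matrix.one_apply_ne, Matrix.one_apply_ne hbb]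
        exact fun hc => hbb (e.injective (Subtype.ext hc))
    have hWP : W * Wᴴ = P := by
      ext x y
      have lhs : (W * Wᴴ) x y
          = ∑ b, U x ((e b : {x // x ∈ S}) : Fin m × Fin l)
              * star (U y ((e b : {x // x ∈ S}) : Fin m × Fin l)) := by
        simp [Matrix.mul_apply, Matrix.conjTranspose_apply, hWdef]
      have rhs : P x y = ∑ s, f s * (U x s * star (U y s)) := by
        rw [hspec, Matrix.mul_apply]
        apply Finset.sum_congr rfl
        intro s _
        rw [Matrix.mul_diagonal]
        simp [Matrix.star_eq_conjTranspose, Matrix.star_apply]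
        ring
      rw [lhs, rhs]
      have step1 : ∑ b, U x ((e b : {x // x ∈ S}) : Fin m × Fin l)
              * star (U y ((e b : {x // x ∈ S}) : Fin m × Fin l))
          = ∑ s ∈ S, U x s * star (U y s) := by
        rw [← Finset.sum_coe_sort S (fun s => U x s * star (U y s))]
        exact Equiv.sum_comp e (fun s : {x // x ∈ S} =>
          U x (s : Fin m × Fin l) * star (U y (s : Fin m × Fin l)))
      rw [step1]
      have step2 : ∑ s ∈ S, U x s * star (U y s)
          = ∑ s ∈ S, f s * (U x s * star (U y s)) := by
        apply Finset.sum_congr rfl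
        intro s hs
        have h8 : hP.eigenvalues s = 1 := (Finset.mem_filter.mp hs).2
        rw [hfdef]
        simp [h8]
      rw [step2]
      apply Finset.sum_subset (Finset.subset_univ S)
      intro s _ hs
      have h9 : hP.eigenvalues s = 0 := by
        rcases eig01 s with h | h
        · exact h
        · exact absurd (Finset.mem_filter.mpr ⟨Finset.mem_univ s, h⟩) hs
      rw [hfdef]
      simp [h9]
    refine ⟨fun i => Matrix.of fun a b => W (i,a) b, ?_, ?_⟩
    · rw [← blockA_aux W, hWW]
    · intro i
      obtain ⟨h, σ, hσ⟩ := hbl i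
      have hbm : (Matrix.of fun a b => P (i,a) (i,b))
          = (Matrix.of fun a b => W (i,a) b) * (Matrix.of fun a b => W (i,a) b)ᴴ := by
        rw [← hWP]
        exact blockB_aux W i
      apply (exists_perm_iff_multiset_eq_aux _ _).mpr
      have hms : Multiset.map h.eigenvalues Finset.univ.val
          = Multiset.map (lam i) Finset.univ.val :=
        (exists_perm_iff_multiset_eq_aux _ _).mp ⟨σ, hσ⟩
      rw [eig_congr_aux hbm h (Matrix.posSemidef_self_mul_conjTranspose _).1] at hms
      rw [eig_multiset_bridge_aux hld (Matrix.of fun a b => W (i,a) b),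
        padVec_multiset_aux hld.le (lam i), hms]
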